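/- Let d ≥ 1, let A ∈ ℝ^{d×d} be symmetric positive definite, let k ≥ 1 and let y_1,…,y_k ∈ ℝ^d. Then det(A + Σ_{h=1}^k y_h y_h^T) ≥ (1 + Σ_{h=1}^k y_h^T A^{-1} y_h)·det A. -/

import Mathlib

open Matrix Finset

private lemma one_add_sum_le_prod_one_add {ι : Type*} (s : Finset ι) (f : ι → ℝ)
    (hf : ∀ i ∈ s, 0 ≤ f i) : 1 + ∑ i ∈ s, f i ≤ ∏ i ∈ s, (1 + f i) := by
  classical
  induction s using Finset.cons_induction with
  | empty => simp
  | cons a s ha ih =>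
    rw [Finset.sum_cons, Finset.prod_cons]
    have h1 : 0 ≤ f a := hf a (Finset.mem_cons_self a s)
    have h2 : ∀ i ∈ s, 0 ≤ f i := fun i hi => hf i (Finset.mem_cons_of_mem hi)
    have hs : 0 ≤ ∑ i ∈ s, f i := Finset.sum_nonneg h2
    have := ih h2
    nlinarith [ih h2]

private lemma trace_mul_vecMulVec {d : ℕ} (N : Matrix (Fin d) (Fin d) ℝ)
    (u v : Fin d → ℝ) : (N * Matrix.vecMulVec u v).trace = v ⬝ᵥ (N *ᵥ u) := by
  simp only [Matrix.trace, Matrix.diag, Matrix.mul_apply, Matrix.vecMulVec_apply,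
    Matrix.mulVec, dotProduct, Finset.mul_sum]
  exact Finset.sum_congr rfl fun i _ => Finset.sum_congr rfl fun j _ => by ring

/-- Key lemma: for a real symmetric positive semidefinite `B`,
`1 + trace B ≤ det (1 + B)`. -/
private lemma one_add_trace_le_det_one_add {d : ℕ} (B : Matrix (Fin d) (Fin d) ℝ)
    (hB : B.PosSemidef) : 1 + B.trace ≤ (1 + B).det := by
  classical
  have hH := hB.isHermitian
  set U : Matrix (Fin d) (Fin d) ℝ := (hH.eigenvectorUnitary : Matrix (Fin d) (Fin d) ℝ) with hU
  have hUU : U * star U = 1 :=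
    Matrix.mem_unitaryGroup_iff.mp hH.eigenvectorUnitary.2
  have hspec : B = U * Matrix.diagonal (RCLike.ofReal ∘ hH.eigenvalues) * star U :=
    hH.spectral_theorem
  have hDiag : (RCLike.ofReal ∘ hH.eigenvalues : Fin d → ℝ) = hH.eigenvalues := by
    ext i; simp
  rw [hDiag] at hspec
  -- trace computation
  have htr : B.trace = ∑ i, hH.eigenvalues i := by
    conv_lhs => rw [hspec]
    rw [Matrix.trace_mul_cycle]
    rw [show star U * U = 1 from Matrix.mem_unitaryGroup_iff'.mp hH.eigenvectorUnitary.2]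
    simp [Matrix.trace_diagonal]
  -- determinant computation
  have hone : (1 : Matrix (Fin d) (Fin d) ℝ) = U * 1 * star U := by
    rw [Matrix.mul_one, hUU]
  have hdet : (1 + B).det = ∏ i, (1 + hH.eigenvalues i) := by
    have : 1 + B = U * (1 + Matrix.diagonal hH.eigenvalues) * star U := by
      conv_lhs => rw [hspec]
      rw [Matrix.mul_add, Matrix.add_mul, Matrix.mul_one, hUU]
    rw [this, Matrix.det_mul, Matrix.det_mul]
    rw [show (1 : Matrix (Fin d) (Fin d) ℝ) + Matrix.diagonal hH.eigenvalues
        = Matrix.diagonal (fun i => 1 + hH.eigenvalues i) by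
      rw [← Matrix.diagonal_one, Matrix.diagonal_add]]
    rw [Matrix.det_diagonal]
    have : U.det * (star U).det = 1 := by
      rw [← Matrix.det_mul, hUU, Matrix.det_one]
    calc U.det * (∏ i, (1 + hH.eigenvalues i)) * (star U).det
        = (U.det * (star U).det) * ∏ i, (1 + hH.eigenvalues i) := by ring
      _ = ∏ i, (1 + hH.eigenvalues i) := by rw [this, one_mul]
  rw [htr, hdet]
  exact one_add_sum_le_prod_one_add _ _ (fun i _ => hB.eigenvalues_nonneg i)

/-- Lemma A.1(b) of the paper.  For `d ≥ 1`, a positive definite `A`,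
`k ≥ 1` and vectors `y_1,…,y_k ∈ ℝ^d`:
`det(A + Σ_h y_h y_hᵀ) ≥ (1 + Σ_h y_hᵀ A⁻¹ y_h)·det A`. -/
theorem det_add_rank_one_sum_ge {d k : ℕ} (hd : 1 ≤ d) (hk : 1 ≤ k)
    (A : Matrix (Fin d) (Fin d) ℝ) (hA : A.PosDef) (y : Fin k → Fin d → ℝ) :
    (1 + ∑ h, (y h) ⬝ᵥ (A⁻¹ *ᵥ y h)) * A.det ≤
      (A + ∑ h, Matrix.vecMulVec (y h) (y h)).det := by
  classical
  set M : Matrix (Fin d) (Fin d) ℝ := ∑ h, Matrix.vecMulVec (y h) (y h) with hM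
  open scoped MatrixOrder in
  set S : Matrix (Fin d) (Fin d) ℝ := CFC.sqrt A with hS
  open scoped MatrixOrder in
  have hSpsd : S.PosSemidef := (CFC.sqrt_nonneg A).posSemidef
  open scoped MatrixOrder in
  have hSS : S * S = A := CFC.sqrt_mul_sqrt_self A hA.posSemidef.nonneg
  have hdetA : 0 < A.det := hA.det_pos
  have hdetS : S.det ≠ 0 := by
    intro h
    rw [← hSS, Matrix.det_mul, h, mul_zero] at hdetA
    exact lt_irrefl _ hdetA
  have hSinv : S * S⁻¹ = 1 := Matrix.mul_nonsing_inv S (isUnit_iff_ne_zero.mpr hdetS)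
  have hSinv' : S⁻¹ * S = 1 := Matrix.nonsing_inv_mul S (isUnit_iff_ne_zero.mpr hdetS)
  have hSH : S.IsHermitian := hSpsd.isHermitian
  have hSinvH : (S⁻¹).IsHermitian := hSH.inv
  -- B := S⁻¹ M S⁻¹ is PSD
  have hterm : ∀ h, (Matrix.vecMulVec (y h) (y h)).PosSemidef := by
    intro h
    constructor
    · ext i j
      simp [Matrix.conjTranspose_apply, Matrix.vecMulVec_apply, mul_comm]
    · have := Matrix.posSemidef_vecMulVec_self_star (y h)
      simp only [star_trivial] at this
      exact this.2
  have hMpsd : M.PosSemidef := by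
    rw [hM]
    have : ∀ s : Finset (Fin k), (∑ h ∈ s, Matrix.vecMulVec (y h) (y h)).PosSemidef := by
      intro s
      induction s using Finset.cons_induction with
      | empty => simpa using Matrix.PosSemidef.zero
      | cons a s ha ih => rw [Finset.sum_cons]; exact (hterm a).add ih
    exact this Finset.univ
  have hBpsd : (S⁻¹ * M * S⁻¹).PosSemidef := by
    have := hMpsd.mul_mul_conjTranspose_same S⁻¹
    rwa [hSinvH.eq] at this
  set B := S⁻¹ * M * S⁻¹ with hB
  -- A + M = S * (1 + B) * S
  have hfact : A + M = S * (1 + B) * S := by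
    rw [Matrix.mul_add, Matrix.add_mul, Matrix.mul_one, hSS, hB]
    congr 1
    rw [← Matrix.mul_assoc, ← Matrix.mul_assoc, hSinv, Matrix.one_mul,
      Matrix.mul_assoc, hSinv', Matrix.mul_one]
  -- trace B = Σ yᵀ A⁻¹ y
  have hAinv : A⁻¹ = S⁻¹ * S⁻¹ := by
    rw [← hSS, Matrix.mul_inv_rev]
  have htrB : B.trace = ∑ h, (y h) ⬝ᵥ (A⁻¹ *ᵥ y h) := by
    rw [hB, Matrix.trace_mul_cycle, ← hAinv, hM, Finset.mul_sum, Matrix.trace_sum]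
    exact Finset.sum_congr rfl fun h _ => trace_mul_vecMulVec _ _ _
  -- conclude
  have hkey : 1 + B.trace ≤ (1 + B).det := one_add_trace_le_det_one_add B hBpsd
  have hdetfact : (A + M).det = (1 + B).det * A.det := by
    rw [hfact, Matrix.det_mul, Matrix.det_mul, ← hSS, Matrix.det_mul]
    ring
  rw [hdetfact, ← htrB]
  exact mul_le_mul_of_nonneg_right hkey (le_of_lt hdetA)
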